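/- With N, ⟨·,·⟩, h, F, V as in the context, let n = 2m ≥ 4 and dim_K N = n. Let M ⊂ N be a π-modular O_K-lattice admitting a standard normal basis, with π₀M ⊆ VM ⊆ M, the O_K-length of M/VM equal to n, and VM of colength 1 in VM + πM. Let e ∈ N satisfy h(e,e) = δ for a unit δ ∈ O_{K₀}^× with σ(δ) = −δ, Ve = Fe = −πe, πe ∈ M, and e ∉ M. Set W := {x ∈ N : h(x,e) = 0} and L := π·((M ∩ W)*), the dual (M ∩ W)* being taken inside W. Then L is an almost π-modular O_K-lattice in W satisfying: πL* ⊞ O_K·(πe) has colength 1 in M and M has colength 1 in L ⊞ O_K·e; moreover VL ⊆ L, π₀L ⊆ VL, and VL has colength at most 1 in VL + πL. -/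

import Mathlib

/-!
Statement 15 (from the proof of Proposition "surjectivity of δ⁺"): given a π-modular
Dieudonné lattice `M ⊂ N` (`dim N = n = 2m ≥ 4`) and a vector `e` with `h(e,e) = δ`
(`δ ∈ O_{K₀}^×`, `σ(δ) = -δ`), `Ve = Fe = -πe`, `πe ∈ M`, `e ∉ M`, the lattice
`L = π·(M ∩ W)^*` (`W = e^⊥`, dual in `W`) is almost π-modular in `W`,
`πL^* ⊞ O_K·(πe)` has colength 1 in `M`, `M` has colength 1 in `L ⊞ O_K·e`,
and `VL ⊆ L`, `π₀L ⊆ VL`, `VL` has colength at most 1 in `VL + πL`.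
-/

noncomputable section

/-- The hermitian form `h(x,y) = ⟨πx,y⟩ + π⟨x,y⟩` attached to the alternating form. -/
def hermOf {K N : Type*} [Field K] [AddCommGroup N] [Module K N]
    (πK : K) (form : N → N → K) : N → N → K :=
  fun x y => form (πK • x) y + πK * form x y

/-- Gram matrix of a standard normal basis of a π-modular lattice of rank `2m`:
the only nonzero pairings are `h(eᵢ,fᵢ) = -π` and `h(fᵢ,eᵢ) = π`. -/
def piGram {K : Type*} [Field K] (πK : K) (m : ℕ) :
    Fin m × Fin 2 → Fin m × Fin 2 → K := fun x y =>
  if x.1 = y.1 then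
    if x.2 = 0 ∧ y.2 = 1 then -πK
    else if x.2 = 1 ∧ y.2 = 0 then πK
    else 0
  else 0

/-- The dual, inside `W = v^⊥`, of a subset `S ⊆ W`:
`{x ∈ W | h(x,y) ∈ O_K for all y ∈ S}`. -/
def dualSetInPerp {K O N : Type*} [Field K] [CommRing O] [Algebra O K]
    [AddCommGroup N] [Module K N]
    (h : N → N → K) (S : Set N) (v : N) : Set N :=
  {x : N | h x v = 0 ∧ ∀ y ∈ S, h x y ∈ Set.range (algebraMap O K)}

/-- `Q` has length `n` as an `O`-module (via composition series). -/
def moduleLengthEq (O Q : Type*) [Ring O] [AddCommGroup Q] [Module O Q] (n : ℕ) : Prop :=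
  ∃ s : CompositionSeries (Submodule O Q), s.head = ⊥ ∧ s.last = ⊤ ∧ s.length = n

/-- `A` has colength one in `B` (as `O`-stable subsets of `N`). -/
def colengthOne (O : Type*) {N : Type*} [CommRing O] [AddCommGroup N] [Module O N]
    (A B : Set N) : Prop :=
  A ⊆ B ∧ A ≠ B ∧ ∀ x ∈ B, x ∉ A → ∀ y ∈ B, ∃ a : O, y - a • x ∈ A

/-- `A` has colength at most one in `B` (as `O`-stable subsets of `N`). -/
def colengthLeOne (O : Type*) {N : Type*} [CommRing O] [AddCommGroup N] [Module O N]
    (A B : Set N) : Prop :=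
  A ⊆ B ∧ ∀ x ∈ B, x ∉ A → ∀ y ∈ B, ∃ a : O, y - a • x ∈ A

theorem stmt_15
    -- the field K with involution `conj`, Frobenius `frob`, ring of integers O_K
    {K O : Type*} [Field K] [CommRing O] [IsDomain O] [IsDiscreteValuationRing O]
    [Algebra O K] [IsFractionRing O K]
    (conj : K ≃+* K) (hconjinv : ∀ x : K, conj (conj x) = x)
    (hconjne : conj ≠ RingEquiv.refl K)
    (frob : K ≃+* K)
    (hfrobO : ∀ a : O, ∃ b : O, frob (algebraMap O K a) = algebraMap O K b)
    (hfrobinvO : ∀ a : O, ∃ b : O, frob.symm (algebraMap O K a) = algebraMap O K b)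
    (hcomm : ∀ x : K, frob (conj x) = conj (frob x))
    (π : O) (hπ : Irreducible π)
    (hconjπ : conj (algebraMap O K π) = - algebraMap O K π)
    (hfrobπ : frob (algebraMap O K π) = algebraMap O K π)
    -- the isocrystal N (of dimension n = 2m ≥ 4) with alternating form and F, V
    (m : ℕ) (hm : 2 ≤ m)
    {N : Type*} [AddCommGroup N] [Module K N] [FiniteDimensional K N]
    [Module O N] [IsScalarTower O K N]
    (hdim : Module.finrank K N = 2 * m)
    (form : N → N → K)
    (haddl : ∀ x y z : N, form (x + y) z = form x z + form y z)
    (haddr : ∀ x y z : N, form x (y + z) = form x y + form x z)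
    (hK₀ : ∀ (a : K) (x y : N), conj a = a → form (a • x) y = a * form x y)
    (hswap : ∀ (a : K) (x y : N), form (a • x) y = form x (conj a • y))
    (halt : ∀ x : N, form x x = 0)
    (hval : ∀ x y : N, conj (form x y) = form x y)
    (hnd : ∀ x : N, x ≠ 0 → ∃ y : N, form x y ≠ 0)
    (Frob Ver : N → N)
    (hFadd : ∀ x y : N, Frob (x + y) = Frob x + Frob y)
    (hVadd : ∀ x y : N, Ver (x + y) = Ver x + Ver y)
    (hFbij : Function.Bijective Frob) (hVbij : Function.Bijective Ver)
    (hFsemi : ∀ (a : K) (x : N), Frob (a • x) = frob a • Frob x)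
    (hVsemi : ∀ (a : K) (x : N), Ver (a • x) = frob.symm a • Ver x)
    (hFV : ∀ x : N, Frob (Ver x) = ((algebraMap O K π) ^ 2) • x)
    (hVF : ∀ x : N, Ver (Frob x) = ((algebraMap O K π) ^ 2) • x)
    (hFform : ∀ x y : N, form (Frob x) y = frob (form x (Ver y)))
    -- M: a π-modular lattice admitting a standard normal basis
    (M : Submodule O N)
    (b : Module.Basis (Fin m × Fin 2) O M)
    (hb : ∀ i j, hermOf (algebraMap O K π) form (b i : N) (b j : N) =
      piGram (algebraMap O K π) m i j)
    (hπmod : ∀ x : N,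
      (∀ y ∈ M, hermOf (algebraMap O K π) form x y ∈ Set.range (algebraMap O K)) ↔
      (algebraMap O K π) • x ∈ M)
    -- VM, with π₀M ⊆ VM ⊆ M, length(M/VM) = n, VM of colength 1 in VM + πM
    (Vsub : Submodule O N) (hVsub : ∀ x : N, x ∈ Vsub ↔ ∃ y ∈ M, x = Ver y)
    (hVM : Vsub ≤ M)
    (hπ₀M : ∀ x ∈ M, ((algebraMap O K π) ^ 2) • x ∈ Vsub)
    (hlen : moduleLengthEq O (↥M ⧸ (Vsub.comap M.subtype)) (2 * m))
    (hcolen : colengthOne O (Vsub : Set N)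
      {x : N | ∃ u ∈ Vsub, ∃ z ∈ M, x = u + π • z})
    -- the vector e: h(e,e) = δ with δ ∈ O_{K₀}^× and σ(δ) = -δ, Ve = Fe = -πe,
    -- πe ∈ M, e ∉ M
    (e : N) (δ : O) (hδu : IsUnit δ)
    (hδfix : conj (algebraMap O K δ) = algebraMap O K δ)
    (hδfrob : frob (algebraMap O K δ) = - algebraMap O K δ)
    (hee : hermOf (algebraMap O K π) form e e = algebraMap O K δ)
    (hVe : Ver e = -((algebraMap O K π) • e))
    (hFe : Frob e = -((algebraMap O K π) • e))
    (hπe : (algebraMap O K π) • e ∈ M) (heM : e ∉ M) :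
    -- conclusions about L = π·(M ∩ W)^*, W = e^⊥
    let hh := hermOf (algebraMap O K π) form
    let D := dualSetInPerp (O := O) hh {y : N | y ∈ M ∧ hh y e = 0} e
    let Lset := {x : N | ∃ z ∈ D, x = (algebraMap O K π) • z}
    let Dstar := dualSetInPerp (O := O) hh Lset e
    -- L is almost π-modular in W: L ⊆ L* ⊆ π^{-1}L with L* of colength 1 in π^{-1}L
    (Lset ⊆ Dstar) ∧
    (∀ x ∈ Dstar, (algebraMap O K π) • x ∈ Lset) ∧
    colengthOne O Dstar {x : N | (algebraMap O K π) • x ∈ Lset} ∧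
    -- πL* ⊞ O_K·(πe) has colength 1 in M
    colengthOne O
      {x : N | ∃ z ∈ Dstar, ∃ a : O,
        x = (algebraMap O K π) • z + a • ((algebraMap O K π) • e)}
      (M : Set N) ∧
    -- M has colength 1 in L ⊞ O_K·e
    colengthOne O (M : Set N)
      {x : N | ∃ z ∈ Lset, ∃ a : O, x = z + a • e} ∧
    -- VL ⊆ L
    (∀ x ∈ Lset, Ver x ∈ Lset) ∧
    -- π₀L ⊆ VL
    (∀ x ∈ Lset, ∃ y ∈ Lset, ((algebraMap O K π) ^ 2) • x = Ver y) ∧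
    -- VL has colength at most 1 in VL + πL
    colengthLeOne O
      {x : N | ∃ u ∈ Lset, x = Ver u}
      {x : N | ∃ u ∈ Lset, ∃ z ∈ Lset, x = Ver u + (algebraMap O K π) • z} := by
  intro hh D Lset Dstar
  classical
  obtain ⟨q, hq⟩ : ∃ q : K, q = algebraMap O K π := ⟨_, rfl⟩
  obtain ⟨dK, hdK⟩ : ∃ d : K, d = algebraMap O K δ := ⟨_, rfl⟩
  have inj : Function.Injective (algebraMap O K) := IsFractionRing.injective O K
  have hq0 : q ≠ 0 := by
    rw [hq]; intro h
    exact hπ.ne_zero (inj (by rw [h, map_zero]))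
  have hd0 : dK ≠ 0 := by
    rw [hdK]; intro h
    exact hδu.ne_zero (inj (by rw [h, map_zero]))
  have hcq : conj q = -q := by rw [hq]; exact hconjπ
  have hfq : frob q = q := by rw [hq]; exact hfrobπ
  have hdfix : conj dK = dK := by rw [hdK]; exact hδfix
  have hhdef : ∀ x y : N, hh x y = form (q • x) y + q * form x y := by
    rw [hq]; exact fun _ _ => rfl
  have hee' : hh e e = dK := by rw [hdK]; exact hee
  have hπe' : q • e ∈ M := by rw [hq]; exact hπe
  have hπmod' : ∀ x : N,
      (∀ y ∈ M, hh x y ∈ Set.range (algebraMap O K)) ↔ q • x ∈ M := by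
    rw [hq]; exact hπmod
  -- basic form lemmas
  have f0l : ∀ y : N, form 0 y = 0 := by
    intro y
    have h := haddl 0 0 y
    rw [add_zero] at h
    exact (left_eq_add.mp h)
  have f0r : ∀ x : N, form x 0 = 0 := by
    intro x
    have h := haddr x 0 0
    rw [add_zero] at h
    exact (left_eq_add.mp h)
  have fnegl : ∀ x y : N, form (-x) y = - form x y := by
    intro x y
    have h := haddl x (-x) y
    rw [add_neg_cancel, f0l] at h
    linear_combination -h
  have fnegr : ∀ x y : N, form x (-y) = - form x y := by
    intro x y
    have h := haddr x y (-y)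
    rw [add_neg_cancel, f0r] at h
    linear_combination -h
  have fanti : ∀ x y : N, form x y = - form y x := by
    intro x y
    have h := halt (x + y)
    rw [haddl, haddr, haddr, halt, halt] at h
    linear_combination h
  -- hh additivity
  have hhaddl : ∀ x y z : N, hh (x + y) z = hh x z + hh y z := by
    intro x y z
    rw [hhdef, hhdef, hhdef, smul_add, haddl, haddl]; ring
  have hhnegl : ∀ x y : N, hh (-x) y = - hh x y := by
    intro x y
    rw [hhdef, hhdef, smul_neg, fnegl, fnegl]; ring
  have hhsubl : ∀ x y z : N, hh (x - y) z = hh x z - hh y z := by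
    intro x y z
    rw [sub_eq_add_neg, hhaddl, hhnegl]; ring
  have hh0l : ∀ y : N, hh 0 y = 0 := by
    intro y; rw [hhdef, smul_zero, f0l]; ring
  have hhaddr : ∀ x y z : N, hh x (y + z) = hh x y + hh x z := by
    intro x y z
    rw [hhdef, hhdef, hhdef, haddr, haddr]; ring
  have hhsubr : ∀ x y z : N, hh x (y - z) = hh x y - hh x z := by
    intro x y z
    rw [hhdef, hhdef, hhdef, sub_eq_add_neg, haddr, haddr, fnegr, fnegr]; ring
  -- linearity of hh in the first variable
  have hfixlin : ∀ (a : K) (x y : N), conj a = a → hh (a • x) y = a * hh x y := by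
    intro a x y ha
    rw [hhdef, hhdef, smul_comm q a x, hK₀ a (q • x) y ha, hK₀ a x y ha]; ring
  have hπlin : ∀ x y : N, hh (q • x) y = q * hh x y := by
    intro x y
    have hqq : conj (q * q) = q * q := by rw [map_mul, hcq]; ring
    rw [hhdef, hhdef, smul_smul, hK₀ (q * q) x y hqq]; ring
  have h2 : (2 : K) ≠ 0 := by
    intro h2
    have hneg : -q = q := by
      have hqq : q + q = 0 := by rw [← two_mul, h2, zero_mul]
      linear_combination -hqq
    have hfix : conj q = q := by rw [hcq, hneg]
    have hz : hh e e = 2 * (q * form e e) := by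
      rw [hhdef, hK₀ q e e hfix]; ring
    rw [h2, zero_mul] at hz
    exact hd0 (hee' ▸ hz)
  have hc2 : conj (2 : K) = 2 := map_ofNat conj 2
  have hlin : ∀ (a : K) (x y : N), hh (a • x) y = a * hh x y := by
    intro a x y
    have hts : a = (a + conj a) / 2 + (a - conj a) / 2 := by field_simp; ring
    have hcs : conj ((a + conj a) / 2) = (a + conj a) / 2 := by
      rw [map_div₀, map_add, hconjinv, hc2]; ring_nf
    have hct : conj ((a - conj a) / 2 / q) = (a - conj a) / 2 / q := by
      rw [map_div₀, map_div₀, map_sub, hconjinv, hc2, hcq]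
      field_simp
      ring
    have htx : ((a - conj a) / 2) • x = ((a - conj a) / 2 / q) • (q • x) := by
      rw [smul_smul, div_mul_cancel₀ _ hq0]
    calc hh (a • x) y = hh (((a + conj a) / 2) • x + ((a - conj a) / 2) • x) y := by
          rw [← add_smul, ← hts]
      _ = ((a + conj a) / 2) * hh x y + hh (((a - conj a) / 2 / q) • (q • x)) y := by
          rw [hhaddl, hfixlin _ x y hcs, htx]
      _ = ((a + conj a) / 2) * hh x y + ((a - conj a) / 2 / q) * (q * hh x y) := by
          rw [hfixlin _ _ _ hct, hπlin]
      _ = a * hh x y := by field_simp; ring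
  -- hermitian symmetry
  have hconjsymm : ∀ x y : N, hh x y = conj (hh y x) := by
    intro x y
    have e1 : form (q • y) x = form (q • x) y := by
      have h := hswap (-q) x y
      rw [map_neg, hcq, neg_neg, neg_smul, fnegl] at h
      -- h : -form (q•x) y = form x (q•y)
      rw [fanti (q • y) x, ← h, neg_neg]
    rw [hhdef, hhdef, map_add, hval, map_mul, hcq, hval, e1, fanti y x]
    ring
  have hsemir : ∀ (a : K) (x y : N), hh x (a • y) = conj a * hh x y := by
    intro a x y
    rw [hconjsymm x (a • y), hlin, map_mul, ← hconjsymm x y]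
  have hsO : ∀ (a : O) (x : N), a • x = (algebraMap O K a) • x :=
    fun a x => (algebraMap_smul K a x).symm
  -- conj preserves the image of O
  have hconjO : ∀ c : O, ∃ d : O, conj (algebraMap O K c) = algebraMap O K d := by
    have hm0 : 0 < m := by omega
    have hb01 : hh ((b (⟨0, hm0⟩, 0) : M) : N) ((b (⟨0, hm0⟩, 1) : M) : N) = -q := by
      have h := hb (⟨0, hm0⟩, 0) (⟨0, hm0⟩, 1)
      have h2 : hh ((b (⟨0, hm0⟩, 0) : M) : N) ((b (⟨0, hm0⟩, 1) : M) : N)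
          = piGram (algebraMap O K π) m (⟨0, hm0⟩, 0) (⟨0, hm0⟩, 1) := h
      rw [h2, hq]
      simp [piGram]
    intro c
    have hx : q • ((q⁻¹ : K) • ((b (⟨0, hm0⟩, 0) : M) : N)) = ((b (⟨0, hm0⟩, 0) : M) : N) :=
      smul_inv_smul₀ hq0 _
    have hint : ∀ y ∈ M, hh ((q⁻¹ : K) • ((b (⟨0, hm0⟩, 0) : M) : N)) y
        ∈ Set.range (algebraMap O K) :=
      (hπmod' _).mpr (by rw [hx]; exact (b (⟨0, hm0⟩, 0)).2)
    have hmem : (c • ((b (⟨0, hm0⟩, 1) : M) : N)) ∈ M := M.smul_mem c (b (⟨0, hm0⟩, 1)).2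
    have h1 : hh ((q⁻¹ : K) • ((b (⟨0, hm0⟩, 0) : M) : N)) (c • ((b (⟨0, hm0⟩, 1) : M) : N))
        = - conj (algebraMap O K c) := by
      rw [hsO, hsemir, hlin, hb01]
      field_simp
    obtain ⟨d, hdd⟩ := hint _ hmem
    refine ⟨-d, ?_⟩
    have h5 : algebraMap O K d = - conj (algebraMap O K c) := by rw [hdd, h1]
    rw [map_neg, h5, neg_neg]
  -- values h(y,e) for y ∈ M lie in O
  have heint : ∀ y ∈ M, hh e y ∈ Set.range (algebraMap O K) := (hπmod' e).mpr hπe'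
  have hMe : ∀ y ∈ M, ∃ c : O, hh y e = algebraMap O K c := by
    intro y hy
    obtain ⟨c, hc⟩ := heint y hy
    obtain ⟨d, hdd⟩ := hconjO c
    exact ⟨d, by rw [hconjsymm y e, ← hc, hdd]⟩
  -- h(M,M) ⊆ πO
  have hMM : ∀ y ∈ M, ∀ z ∈ M, ∃ c : O, hh y z = q * algebraMap O K c := by
    intro y hy z hz
    have hx : q • ((q⁻¹ : K) • y) = y := smul_inv_smul₀ hq0 _
    have hint : ∀ w ∈ M, hh ((q⁻¹ : K) • y) w ∈ Set.range (algebraMap O K) :=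
      (hπmod' _).mpr (by rw [hx]; exact hy)
    obtain ⟨c, hc⟩ := hint z hz
    refine ⟨c, ?_⟩
    have : hh y z = q * hh ((q⁻¹ : K) • y) z := by
      rw [← hπlin, hx]
    rw [this, hc]
  -- a vector y₀ ∈ M with h(y₀,e) a unit
  have hy₀ : ∃ y₀ ∈ M, ∃ u : O, IsUnit u ∧ hh y₀ e = algebraMap O K u := by
    by_contra hcon
    push_neg at hcon
    have key : ∀ y ∈ M, hh ((q⁻¹ : K) • e) y ∈ Set.range (algebraMap O K) := by
      intro y hy
      obtain ⟨c, hc⟩ := hMe y hy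
      have hnu : ¬ IsUnit c := fun hcu => hcon y hy c hcu hc
      have hdvd : π ∣ c := by
        have h1 : c ∈ IsLocalRing.maximalIdeal O :=
          (IsLocalRing.mem_maximalIdeal c).mpr hnu
        rw [hπ.maximalIdeal_eq] at h1
        exact (Ideal.mem_span_singleton).mp h1
      obtain ⟨d, rfl⟩ := hdvd
      obtain ⟨d', hd'⟩ := hconjO d
      refine ⟨-d', ?_⟩
      have h3 : hh e y = conj (hh y e) := hconjsymm e y
      have h4 : hh ((q⁻¹ : K) • e) y = q⁻¹ * hh e y := hlin _ _ _
      have hc2 : hh y e = algebraMap O K π * algebraMap O K d := by rw [hc, map_mul]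
      rw [h4, h3, hc2, map_mul, ← hq, hcq, hd', map_neg]
      field_simp
    have : q • ((q⁻¹ : K) • e) ∈ M := (hπmod' _).mp key
    rw [smul_inv_smul₀ hq0] at this
    exact heM this
  obtain ⟨y₀, hy₀M, u, hu, hy₀e⟩ := hy₀
  -- inverse of δ inside O
  obtain ⟨δinv, hδδ⟩ : ∃ δinv : O, δ * δinv = 1 := by
    obtain ⟨v, hv⟩ := hδu
    exact ⟨↑v⁻¹, by rw [← hv]; exact v.mul_inv⟩
  have hdd : dK * algebraMap O K δinv = 1 := by
    rw [hdK, ← map_mul, hδδ, map_one]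
  -- the orthogonal projection onto W, restricted to M
  set pm : N → N := fun w => w - (hh w e * algebraMap O K δinv) • e with hpm
  have hpmdef : ∀ w : N, pm w = w - (hh w e * algebraMap O K δinv) • e := fun _ => rfl
  have hpmW : ∀ w : N, hh (pm w) e = 0 := by
    intro w
    rw [hpmdef, hhsubl, hlin, hee']
    linear_combination (-(hh w e)) * hdd
  have hpmfix : ∀ w : N, hh w e = 0 → pm w = w := by
    intro w h
    rw [hpmdef, h, zero_mul, zero_smul, sub_zero]
  have hpmadd : ∀ w w' : N, pm (w + w') = pm w + pm w' := by
    intro w w'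
    rw [hpmdef, hpmdef, hpmdef, hhaddl, add_mul, add_smul]
    abel
  have hpmsmul : ∀ (a : K) (w : N), pm (a • w) = a • pm w := by
    intro a w
    rw [hpmdef, hpmdef, hlin, smul_sub, mul_assoc, mul_smul]
  have hpm0 : pm 0 = 0 := by
    rw [hpmdef, hh0l, zero_mul, zero_smul, sub_zero]
  have hpmsub : ∀ w w' : N, pm (w - w') = pm w - pm w' := by
    intro w w'
    have h := hpmadd (w - w') w'
    rw [sub_add_cancel] at h
    rw [h]; abel
  -- membership characterizations for the let-bound sets
  have hmemD : ∀ x : N, x ∈ D ↔ (hh x e = 0 ∧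
      ∀ y, y ∈ M → hh y e = 0 → hh x y ∈ Set.range (algebraMap O K)) := by
    intro x
    constructor
    · rintro ⟨h1, h2⟩; exact ⟨h1, fun y hy hye => h2 y ⟨hy, hye⟩⟩
    · rintro ⟨h1, h2⟩; exact ⟨h1, fun y hy => h2 y hy.1 hy.2⟩
  have hmemLset : ∀ x : N, x ∈ Lset ↔ ∃ z, z ∈ D ∧ x = q • z := by
    intro x
    rw [hq]
    exact Iff.rfl
  have hmemDstar : ∀ x : N, x ∈ Dstar ↔ (hh x e = 0 ∧
      ∀ y ∈ Lset, hh x y ∈ Set.range (algebraMap O K)) := fun x => Iff.rfl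
  -- q • pm w ∈ M for w ∈ M
  have hsmulM : ∀ (a : O) (v : N), v ∈ M → (algebraMap O K a) • v ∈ M := by
    intro a v hv; rw [← hsO]; exact M.smul_mem a hv
  have hqwM : ∀ w ∈ M, q • w ∈ M := by
    intro w hw; rw [hq]; exact hsmulM π w hw
  have hπpmM : ∀ w ∈ M, q • pm w ∈ M := by
    intro w hw
    obtain ⟨c, hc⟩ := hMe w hw
    have h1 : q • pm w = q • w - (algebraMap O K (c * δinv)) • (q • e) := by
      rw [hpmdef, smul_sub, hc, smul_smul, smul_smul, map_mul, mul_comm]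
    rw [h1]
    exact M.sub_mem (hqwM w hw) (hsmulM _ _ hπe')
  -- the characterization of Lset
  have hLset : Lset = {x : N | ∃ w ∈ M, x = pm w} := by
    ext x
    rw [hmemLset]
    constructor
    · rintro ⟨z, hzD, rfl⟩
      obtain ⟨hze, hzint⟩ := (hmemD z).1 hzD
      obtain ⟨uinv, huu⟩ : ∃ uinv : O, u * uinv = 1 := by
        obtain ⟨v, hv⟩ := hu
        exact ⟨↑v⁻¹, by rw [← hv]; exact v.mul_inv⟩
      have huuK : algebraMap O K u * algebraMap O K uinv = 1 := by
        rw [← map_mul, huu, map_one]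
      have hxt : ∀ y ∈ M, hh (z - (hh z y₀ * conj (algebraMap O K uinv)) • e) y
          ∈ Set.range (algebraMap O K) := by
        intro y hy
        obtain ⟨c, hc⟩ := hMe y hy
        have hy'M : y - (c * uinv) • y₀ ∈ M := M.sub_mem hy (M.smul_mem _ hy₀M)
        have hy'e : hh (y - (c * uinv) • y₀) e = 0 := by
          rw [hhsubl, hsO, hlin, hc, hy₀e, map_mul]
          linear_combination (-(algebraMap O K c)) * huuK
        have hint0 : hh z (y - (c * uinv) • y₀) ∈ Set.range (algebraMap O K) :=
          hzint _ hy'M hy'e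
        have hexp : hh (z - (hh z y₀ * conj (algebraMap O K uinv)) • e) y
            = hh z (y - (c * uinv) • y₀) := by
          rw [hhsubl, hlin, hconjsymm e y, hc, hhsubr, hsO, hsemir, map_mul, map_mul]
          ring
        rw [hexp]
        exact hint0
      have hmem2 : q • (z - (hh z y₀ * conj (algebraMap O K uinv)) • e) ∈ M :=
        (hπmod' _).mp hxt
      refine ⟨q • (z - (hh z y₀ * conj (algebraMap O K uinv)) • e), hmem2, ?_⟩
      set γ := hh z y₀ * conj (algebraMap O K uinv) with hγ
      have hsplit : q • z = q • (z - γ • e) + (q * γ) • e := by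
        rw [smul_sub, smul_smul]; abel
      have hγe : hh (q • (z - γ • e)) e = -(q * γ) * dK := by
        have h0 : hh (q • z) e = 0 := by rw [hπlin, hze, mul_zero]
        rw [hsplit, hhaddl, hlin (q * γ) e e, hee'] at h0
        linear_combination h0
      rw [hpmdef, hγe]
      have hcoef : -(q * γ) * dK * algebraMap O K δinv = -(q * γ) := by
        rw [mul_assoc, hdd, mul_one]
      rw [hcoef, neg_smul, sub_neg_eq_add, hsplit]
    · rintro ⟨w, hw, rfl⟩
      refine ⟨(q⁻¹ : K) • pm w, ?_, (smul_inv_smul₀ hq0 _).symm⟩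
      rw [hmemD]
      constructor
      · rw [hlin, hpmW, mul_zero]
      · intro y hy hye
        obtain ⟨c, hc⟩ := hMM w hw y hy
        have hhe : hh e y = 0 := by rw [hconjsymm e y, hye, map_zero]
        have hval2 : hh ((q⁻¹ : K) • pm w) y = algebraMap O K c := by
          rw [hlin, hpmdef, hhsubl, hlin, hhe, mul_zero, sub_zero, hc, ← mul_assoc,
            inv_mul_cancel₀ hq0, one_mul]
        exact ⟨c, hval2.symm⟩
  -- the characterization of Dstar
  have hDstar : Dstar = {x : N | hh x e = 0 ∧ q • x ∈ M} := by
    ext x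
    constructor
    · rintro ⟨hxe, hxint⟩
      refine ⟨hxe, (hπmod' x).mp ?_⟩
      intro y hy
      have hpmy : pm y ∈ Lset := by rw [hLset]; exact ⟨y, hy, rfl⟩
      have h1 := hxint _ hpmy
      have h2 : hh x (pm y) = hh x y := by
        rw [hpmdef, hhsubr, hsemir, hxe, mul_zero, sub_zero]
      rw [← h2]
      exact h1
    · rintro ⟨hxe, hxM⟩
      refine ⟨hxe, ?_⟩
      intro y hy
      rw [hLset] at hy
      obtain ⟨w, hw, rfl⟩ := hy
      have h2 : hh x (pm w) = hh x w := by
        rw [hpmdef, hhsubr, hsemir, hxe, mul_zero, sub_zero]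
      rw [h2]
      exact (hπmod' x).mpr hxM w hw
  -- membership criteria for pm w in M
  have hδinvu : IsUnit δinv := IsUnit.of_mul_eq_one (a := δinv) δ (by rw [mul_comm]; exact hδδ)
  have hpmMem : ∀ w ∈ M, ∀ c : O, hh w e = algebraMap O K c → π ∣ c → pm w ∈ M := by
    intro w hw c hc hdvd
    obtain ⟨d, rfl⟩ := hdvd
    have h1 : (hh w e * algebraMap O K δinv) • e = (d * δinv) • (q • e) := by
      rw [hc, hsO, smul_smul, hq, ← map_mul, ← map_mul,
        show π * d * δinv = d * δinv * π from by ring]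
    rw [hpmdef, h1]
    exact M.sub_mem hw (M.smul_mem _ hπe')
  have hpmNMem : ∀ w ∈ M, ∀ c : O, hh w e = algebraMap O K c → IsUnit c → pm w ∉ M := by
    intro w hw c hc hcu hmem
    have hwM : (hh w e * algebraMap O K δinv) • e = w - pm w := by
      rw [hpmdef]; abel
    have hmem2 : ((c * δinv) • e : N) ∈ M → False := by
      intro hce
      obtain ⟨vu, hvu⟩ := hcu.mul hδinvu
      have he2 : e = (↑vu⁻¹ : O) • ((c * δinv) • e) := by
        rw [smul_smul, ← hvu, vu.inv_mul, one_smul]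
      exact heM (he2 ▸ M.smul_mem _ hce)
    apply hmem2
    have h9 : ((c * δinv) • e : N) = w - pm w := by
      rw [hsO, map_mul, ← hc, hwM]
    rw [h9]
    exact M.sub_mem hw hmem
  have hdvdO : ∀ c : O, ¬ IsUnit c → π ∣ c := by
    intro c hnu
    have h1 : c ∈ IsLocalRing.maximalIdeal O := (IsLocalRing.mem_maximalIdeal c).mpr hnu
    rw [hπ.maximalIdeal_eq] at h1
    exact (Ideal.mem_span_singleton).mp h1
  -- infrastructure for F and V
  have hVe' : Ver e = -(q • e) := by rw [hq]; exact hVe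
  have hFe' : Frob e = -(q • e) := by rw [hq]; exact hFe
  have hVneg : ∀ x : N, Ver (-x) = - Ver x := by
    intro x
    have h1 : (-x : N) = (-1 : K) • x := by rw [neg_smul, one_smul]
    rw [h1, hVsemi, map_neg, map_one, neg_smul, one_smul]
  have hVsub2 : ∀ x y : N, Ver (x - y) = Ver x - Ver y := by
    intro x y; rw [sub_eq_add_neg, hVadd, hVneg, sub_eq_add_neg]
  have hFh : ∀ x y : N, hh (Frob x) y = frob (hh x (Ver y)) := by
    intro x y
    have h1 : q • Frob x = Frob (q • x) := by rw [hFsemi, hfq]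
    rw [hhdef, hhdef, h1, hFform, hFform, map_add, map_mul, hfq]
  have hVW : ∀ x : N, hh x e = 0 → hh (Ver x) e = 0 := by
    intro x hx
    have h1 := hFh e x
    rw [hFe', hhnegl, hπlin] at h1
    have h2 : hh e x = 0 := by rw [hconjsymm e x, hx, map_zero]
    rw [h2, mul_zero, neg_zero] at h1
    have h3 : hh e (Ver x) = 0 := (map_eq_zero_iff frob frob.injective).mp h1.symm
    rw [hconjsymm (Ver x) e, h3, map_zero]
  have hVnorm : ∀ (x t : N), t ∈ M → hh x e = 0 → ∀ bK : K, x = Ver t + bK • (q • e) →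
      ∃ u2, (∃ w ∈ M, u2 = pm w) ∧ x = Ver u2 := by
    intro x t ht hxe bK hx
    have hVpm : Ver (pm t) = Ver t + (frob.symm (hh t e * algebraMap O K δinv)) • (q • e) := by
      rw [hpmdef, hVsub2, hVsemi, hVe', smul_neg, sub_neg_eq_add]
    have hdiff : x - Ver (pm t)
        = (bK - frob.symm (hh t e * algebraMap O K δinv)) • (q • e) := by
      rw [hx, hVpm, sub_smul]; abel
    have h0 : hh (x - Ver (pm t)) e = 0 := by
      have h00 : hh (Ver (pm t)) e = 0 := hVW (pm t) (hpmW t)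
      rw [hhsubl, hxe, h00, sub_zero]
    rw [hdiff, hlin, hπlin, hee'] at h0
    have hd0' : bK - frob.symm (hh t e * algebraMap O K δinv) = 0 := by
      rcases mul_eq_zero.mp h0 with h | h
      · exact h
      · rcases mul_eq_zero.mp h with h' | h'
        · exact absurd h' hq0
        · exact absurd h' hd0
    refine ⟨pm t, ⟨t, ht, rfl⟩, ?_⟩
    rw [hd0', zero_smul] at hdiff
    exact sub_eq_zero.mp hdiff
  have hPadd : ∀ u v : N, (∃ w ∈ M, u = pm w) → (∃ w ∈ M, v = pm w) →
      (∃ w ∈ M, u + v = pm w) := by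
    rintro u v ⟨w1, h1, rfl⟩ ⟨w2, h2, rfl⟩
    exact ⟨w1 + w2, M.add_mem h1 h2, (hpmadd w1 w2).symm⟩
  have hPsmul : ∀ (a : O) (u : N), (∃ w ∈ M, u = pm w) → (∃ w ∈ M, a • u = pm w) := by
    rintro a u ⟨w1, h1, rfl⟩
    refine ⟨a • w1, M.smul_mem a h1, ?_⟩
    rw [hsO, hsO, hpmsmul]
  have hPsub : ∀ u v : N, (∃ w ∈ M, u = pm w) → (∃ w ∈ M, v = pm w) →
      (∃ w ∈ M, u - v = pm w) := by
    rintro u v ⟨w1, h1, rfl⟩ ⟨w2, h2, rfl⟩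
    exact ⟨w1 - w2, M.sub_mem h1 h2, (hpmsub w1 w2).symm⟩
  have hP0 : (∃ w ∈ M, (0 : N) = pm w) := ⟨0, M.zero_mem, hpm0.symm⟩
  -- the goal, after rewriting the lattices into explicit form
  rw [← hq]
  refine ⟨?_, ?_, ?_, ?_, ?_, ?_, ?_, ?_⟩
  -- (1) Lset ⊆ Dstar
  · rw [hLset, hDstar]
    rintro x ⟨w, hw, rfl⟩
    exact ⟨hpmW w, hπpmM w hw⟩
  -- (2) q • Dstar ⊆ Lset
  · rw [hLset, hDstar]
    rintro x ⟨hxe, hxM⟩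
    exact ⟨q • x, hxM, (hpmfix _ (by rw [hπlin, hxe, mul_zero])).symm⟩
  -- (3) Dstar of colength 1 in π⁻¹ Lset
  · rw [hLset, hDstar]
    refine ⟨?_, ?_, ?_⟩
    · rintro x ⟨hxe, hxM⟩
      exact ⟨q • x, hxM, (hpmfix _ (by rw [hπlin, hxe, mul_zero])).symm⟩
    · intro heq
      have hx₁B : ((q⁻¹ : K) • pm y₀) ∈ {x : N | q • x ∈ {x : N | ∃ w ∈ M, x = pm w}} := by
        exact ⟨y₀, hy₀M, smul_inv_smul₀ hq0 _⟩
      rw [← heq] at hx₁B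
      obtain ⟨-, hM'⟩ := hx₁B
      rw [smul_inv_smul₀ hq0] at hM'
      exact hpmNMem y₀ hy₀M u hy₀e hu hM'
    · intro x hxB hxA y hyB
      obtain ⟨w, hw, hqx⟩ := hxB
      obtain ⟨w', hw', hqy⟩ := hyB
      have hxe : hh x e = 0 := by
        have h1 := hπlin x e
        rw [hqx, hpmW] at h1
        rcases mul_eq_zero.mp h1.symm with h | h
        · exact absurd h hq0
        · exact h
      have hye : hh y e = 0 := by
        have h1 := hπlin y e
        rw [hqy, hpmW] at h1
        rcases mul_eq_zero.mp h1.symm with h | h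
        · exact absurd h hq0
        · exact h
      have hxnM : pm w ∉ M := fun hpmem => hxA ⟨hxe, by rw [hqx]; exact hpmem⟩
      obtain ⟨c, hc⟩ := hMe w hw
      have hcu : IsUnit c := by
        by_contra hnc
        exact hxnM (hpmMem w hw c hc (hdvdO c hnc))
      obtain ⟨cinv, hci⟩ : ∃ cinv : O, c * cinv = 1 := by
        obtain ⟨v, hv⟩ := hcu
        exact ⟨↑v⁻¹, by rw [← hv]; exact v.mul_inv⟩
      obtain ⟨c', hc'⟩ := hMe w' hw'
      have hkey : c' * cinv * c = c' := by
        rw [mul_assoc, mul_comm cinv c, hci, mul_one]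
      have h3 : hh (w' - (c' * cinv) • w) e = 0 := by
        rw [hhsubl, hsO, hlin, hc, hc', ← map_mul, hkey, sub_self]
      refine ⟨c' * cinv, ?_, ?_⟩
      · rw [hhsubl, hsO, hlin, hxe, hye, mul_zero, sub_zero]
      · have h4 : q • (y - (c' * cinv) • x) = w' - (c' * cinv) • w := by
          have h5 : q • ((c' * cinv) • x) = (c' * cinv) • pm w := by
            rw [hsO, smul_smul, mul_comm, ← smul_smul, hqx, ← hsO]
          have h6 : ((c' * cinv) • pm w : N) = pm ((c' * cinv) • w) := by
            rw [hsO, hsO, hpmsmul]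
          rw [smul_sub, hqy, h5, h6, ← hpmsub, hpmfix _ h3]
        rw [h4]
        exact M.sub_mem hw' (M.smul_mem _ hw)
  -- (4) πL* ⊞ O·(πe) has colength 1 in M
  · rw [hDstar]
    refine ⟨?_, ?_, ?_⟩
    · rintro x ⟨z, ⟨hze, hzM⟩, a, rfl⟩
      exact M.add_mem hzM (M.smul_mem a hπe')
    · intro heq
      have hy₀A : y₀ ∈ {x : N | ∃ z ∈ {x : N | hh x e = 0 ∧ q • x ∈ M},
          ∃ a : O, x = q • z + a • (q • e)} := by
        rw [heq]; exact hy₀M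
      obtain ⟨z, ⟨hze, hzM⟩, a, hy0eq⟩ := hy₀A
      have h5 : algebraMap O K u = algebraMap O K (a * (π * δ)) := by
        rw [← hy₀e, hy0eq, hhaddl, hπlin, hze, mul_zero, zero_add, hsO, hlin, hπlin, hee',
          map_mul, map_mul, hq, hdK]
      have h6 : u = a * (π * δ) := inj h5
      exact hπ.not_isUnit (isUnit_of_dvd_unit ⟨a * δ, by rw [h6]; ring⟩ hu)
    · intro x hxM hxA y hyM
      obtain ⟨c, hc⟩ := hMe x hxM
      have hcu : IsUnit c := by
        by_contra hnc
        obtain ⟨d, hdq⟩ := hdvdO c hnc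
        apply hxA
        refine ⟨(q⁻¹ : K) • pm x, ⟨?_, ?_⟩, d * δinv, ?_⟩
        · rw [hlin, hpmW, mul_zero]
        · rw [smul_inv_smul₀ hq0]
          exact hpmMem x hxM c hc ⟨d, hdq⟩
        · rw [smul_inv_smul₀ hq0, hpmdef]
          have h1 : (hh x e * algebraMap O K δinv) • e = (d * δinv) • (q • e) := by
            rw [hc, hdq, hsO, smul_smul, hq, ← map_mul, ← map_mul,
              show π * d * δinv = d * δinv * π from by ring]
          rw [h1]; abel
      obtain ⟨cinv, hci⟩ : ∃ cinv : O, c * cinv = 1 := by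
        obtain ⟨v, hv⟩ := hcu
        exact ⟨↑v⁻¹, by rw [← hv]; exact v.mul_inv⟩
      obtain ⟨c', hc'⟩ := hMe y hyM
      have hkey : c' * cinv * c = c' := by
        rw [mul_assoc, mul_comm cinv c, hci, mul_one]
      have h3 : hh (y - (c' * cinv) • x) e = 0 := by
        rw [hhsubl, hsO, hlin, hc, hc', ← map_mul, hkey, sub_self]
      have hmem3 : y - (c' * cinv) • x ∈ M := M.sub_mem hyM (M.smul_mem _ hxM)
      refine ⟨c' * cinv, (q⁻¹ : K) • (y - (c' * cinv) • x), ⟨?_, ?_⟩, 0, ?_⟩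
      · rw [hlin, h3, mul_zero]
      · rw [smul_inv_smul₀ hq0]; exact hmem3
      · rw [smul_inv_smul₀ hq0, zero_smul, add_zero]
  -- (5) M has colength 1 in L ⊞ O·e
  · rw [hLset]
    have hπeO : (π : O) • e ∈ M := by
      rw [hsO, ← hq]; exact hπe'
    have hBiff : ∀ x : N, (∃ z ∈ {x : N | ∃ w ∈ M, x = pm w}, ∃ a : O, x = z + a • e) ↔
        (∃ w ∈ M, ∃ b : O, x = w + b • e) := by
      intro x
      constructor
      · rintro ⟨z, ⟨w, hw, rfl⟩, a, rfl⟩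
        obtain ⟨c, hc⟩ := hMe w hw
        refine ⟨w, hw, a - c * δinv, ?_⟩
        rw [hpmdef, hc, ← map_mul, ← hsO, sub_smul]
        abel
      · rintro ⟨w, hw, b, rfl⟩
        obtain ⟨c, hc⟩ := hMe w hw
        refine ⟨pm w, ⟨w, hw, rfl⟩, c * δinv + b, ?_⟩
        rw [hpmdef, hc, ← map_mul, ← hsO, add_smul]
        abel
    refine ⟨?_, ?_, ?_⟩
    · intro x hx
      exact (hBiff x).mpr ⟨x, hx, 0, by rw [zero_smul, add_zero]⟩
    · intro heq
      have he1 : e ∈ {x : N | ∃ z ∈ {x : N | ∃ w ∈ M, x = pm w}, ∃ a : O, x = z + a • e} :=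
        (hBiff e).mpr ⟨0, M.zero_mem, 1, by rw [one_smul, zero_add]⟩
      rw [← heq] at he1
      exact heM he1
    · intro x hxB hxM y hyB
      obtain ⟨w, hw, b, rfl⟩ := (hBiff x).mp hxB
      obtain ⟨w2, hw2, b2, rfl⟩ := (hBiff y).mp hyB
      have hbu : IsUnit b := by
        by_contra hnb
        obtain ⟨d, hdq⟩ := hdvdO b hnb
        apply hxM
        have hbe : (b • e : N) ∈ M := by
          rw [hdq, show π * d = d * π from mul_comm _ _, mul_smul]
          exact M.smul_mem d hπeO
        exact M.add_mem hw hbe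
      obtain ⟨binv, hbi⟩ : ∃ binv : O, b * binv = 1 := by
        obtain ⟨v, hv⟩ := hbu
        exact ⟨↑v⁻¹, by rw [← hv]; exact v.mul_inv⟩
      refine ⟨b2 * binv, ?_⟩
      have hkey2 : b2 - b2 * binv * b = 0 := by
        rw [mul_assoc, mul_comm binv b, hbi, mul_one, sub_self]
      have h8 : w2 + b2 • e - (b2 * binv) • (w + b • e)
          = w2 - (b2 * binv) • w + (b2 - b2 * binv * b) • e := by
        rw [smul_add, sub_smul, smul_smul]; abel
      rw [h8, hkey2, zero_smul, add_zero]
      exact M.sub_mem hw2 (M.smul_mem _ hw)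
  -- (6) VL ⊆ L
  · rw [hLset]
    rintro x ⟨w, hw, rfl⟩
    obtain ⟨c, hc⟩ := hMe w hw
    obtain ⟨s', hs'⟩ := hfrobinvO (c * δinv)
    have hVpm : Ver (pm w) = Ver w + s' • (q • e) := by
      rw [hpmdef, hVsub2, hVsemi, hVe', smul_neg, sub_neg_eq_add, hc, ← map_mul, hs', ← hsO]
    have hmem : Ver (pm w) ∈ M := by
      rw [hVpm]
      exact M.add_mem (hVM ((hVsub (Ver w)).mpr ⟨w, hw, rfl⟩)) (M.smul_mem s' hπe')
    exact ⟨Ver (pm w), hmem, (hpmfix _ (hVW (pm w) (hpmW w))).symm⟩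
  -- (7) π₀ L ⊆ VL
  · rw [hLset]
    rintro x ⟨w, hw, rfl⟩
    have h0 : (q ^ 2) • w ∈ Vsub := by rw [hq]; exact hπ₀M w hw
    obtain ⟨z, hz, hzeq⟩ := (hVsub _).mp h0
    have heq2 : (q ^ 2) • pm w
        = Ver z + (-(q * (hh w e * algebraMap O K δinv))) • (q • e) := by
      rw [hpmdef, smul_sub, ← hzeq]
      have h9 : (q ^ 2) • ((hh w e * algebraMap O K δinv) • e)
          = -((-(q * (hh w e * algebraMap O K δinv))) • (q • e)) := by
        rw [smul_smul, smul_smul, ← neg_smul]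
        congr 1
        ring
      rw [h9, sub_neg_eq_add]
    obtain ⟨u2, hu2, hueq⟩ := hVnorm ((q ^ 2) • pm w) z hz
      (by rw [hlin, hpmW, mul_zero]) _ heq2
    exact ⟨u2, hu2, hueq⟩
  -- (8) VL of colength at most 1 in VL + πL
  · rw [hLset]
    constructor
    · rintro x ⟨u, hu2, rfl⟩
      exact ⟨u, hu2, 0, hP0, by rw [smul_zero, add_zero]⟩
    · intro x hxB hxA y hyB
      obtain ⟨u, huP, z, hzP, hxeq⟩ := hxB
      obtain ⟨u', hu'P, z', hz'P, hyeq⟩ := hyB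
      obtain ⟨w, hw, hzw⟩ := hzP
      obtain ⟨w2, hw2, hz'w⟩ := hz'P
      have hqz : ∀ w3 : N, w3 ∈ M → ∀ zz : N, zz = pm w3 → ∀ t : N, t ∈ M →
          q • w3 = Ver t → ∃ u2, (∃ w4 ∈ M, u2 = pm w4) ∧ q • zz = Ver u2 := by
        intro w3 hw3 zz hzz t ht hteq2
        refine hVnorm (q • zz) t ht (by rw [hzz, hπlin, hpmW, mul_zero])
          (-(hh w3 e * algebraMap O K δinv)) ?_
        have h9 : q • ((hh w3 e * algebraMap O K δinv) • e)
            = (hh w3 e * algebraMap O K δinv) • (q • e) := by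
          rw [smul_smul, smul_smul, mul_comm]
        rw [hzz, hpmdef, smul_sub, ← hteq2, neg_smul, h9, sub_eq_add_neg]
      have hπw : (π : O) • w ∉ Vsub := by
        intro hmem
        obtain ⟨t, ht, hteq2⟩ := (hVsub _).mp hmem
        have hqwt : q • w = Ver t := by rw [hq, ← hsO]; exact hteq2
        obtain ⟨u2, hu2P, hu2eq⟩ := hqz w hw z hzw t ht hqwt
        exact hxA ⟨u + u2, hPadd u u2 huP hu2P, by rw [hxeq, hu2eq, ← hVadd]⟩
      obtain ⟨a, ha⟩ := hcolen.2.2 ((π : O) • w) ⟨0, Vsub.zero_mem, w, hw, (zero_add _).symm⟩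
        hπw ((π : O) • w2) ⟨0, Vsub.zero_mem, w2, hw2, (zero_add _).symm⟩
      obtain ⟨t, ht, hteq⟩ := (hVsub _).mp ha
      obtain ⟨s', hs'⟩ := hfrobO a
      have hfs : frob.symm (algebraMap O K s') = algebraMap O K a := by
        rw [← hs', RingEquiv.symm_apply_apply]
      have hsu : a • Ver u = Ver (s' • u) := by
        rw [hsO s' u, hVsemi, hfs, ← hsO]
      have hw3M : w2 - a • w ∈ M := M.sub_mem hw2 (M.smul_mem a hw)
      have hz3 : z' - a • z = pm (w2 - a • w) := by
        rw [hz'w, hzw, hpmsub, hsO a w, hpmsmul, ← hsO]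
      have hqw3 : q • (w2 - a • w) = Ver t := by
        have e1 : q • (a • w) = a • ((π : O) • w) := by
          rw [hsO a w, hsO π w, ← hq, hsO a, smul_smul, smul_smul,
            mul_comm q (algebraMap O K a)]
        have e2 : q • w2 = (π : O) • w2 := by rw [hsO π w2, ← hq]
        rw [smul_sub, e2, e1, hteq]
      obtain ⟨u3, hu3P, hu3eq⟩ := hqz (w2 - a • w) hw3M (z' - a • z) hz3 t ht hqw3
      refine ⟨a, u' - s' • u + u3, hPadd _ _ (hPsub _ _ hu'P (hPsmul s' u huP)) hu3P, ?_⟩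
      rw [hyeq, hxeq, hVadd, hVsub2, ← hsu, ← hu3eq]
      have e3 : q • (z' - a • z) = q • z' - a • (q • z) := by
        rw [smul_sub, hsO a z, hsO a (q • z), smul_smul, smul_smul,
          mul_comm q (algebraMap O K a)]
      rw [e3, smul_add]
      abel
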